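/- arXiv:0911.5715 — 3 statements merged into one kernel-verified Lean document; each statement's English description precedes it below -/
import Mathlib

section
/- Let n ≥ 2 be an integer and let φ be an orientation-preserving homeomorphism of the unit circle {z ∈ ℂ : |z| = 1} such that φ(1) = 1 and φ(z^n) = φ(z)^n for all z on the unit circle. Then φ fixes every n^k-th root of unity: for every z on the unit circle with z^(n^k) = 1 for some k ∈ ℕ, one has φ(z) = z. -/
open Complex Real

lemma int_valued_const {F : ℝ → ℝ} (hF : Continuous F)
    (h : ∀ x, ∃ m : ℤ, F x = m) (x : ℝ) : F x = F 0 := by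
  obtain ⟨p, hp⟩ := h x
  obtain ⟨q, hq⟩ := h 0
  have hrange : (Set.range F).OrdConnected := by
    have := (isPreconnected_univ.image F hF.continuousOn).ordConnected
    rwa [Set.image_univ] at this
  by_contra hne
  have hpq : p ≠ q := fun h' => hne (by rw [hp, hq, h'])
  have hlt : ((min p q : ℤ) : ℝ) + 1/2 ∈ Set.Icc (min (F x) (F 0)) (max (F x) (F 0)) := by
    constructor
    · rw [hp, hq, ← Int.cast_min]; linarith
    · rw [hp, hq, ← Int.cast_max]
      have h1 : min p q + 1 ≤ max p q := by omega
      have h2 : ((min p q : ℤ) : ℝ) + 1 ≤ ((max p q : ℤ) : ℝ) := by exact_mod_cast h1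
      linarith
  have h1 : min (F x) (F 0) ∈ Set.range F := by
    rcases min_choice (F x) (F 0) with h' | h' <;> rw [h'] <;> exact ⟨_, rfl⟩
  have h2 : max (F x) (F 0) ∈ Set.range F := by
    rcases max_choice (F x) (F 0) with h' | h' <;> rw [h'] <;> exact ⟨_, rfl⟩
  obtain ⟨y, hy⟩ := hrange.out h1 h2 hlt
  obtain ⟨r, hr⟩ := h y
  rw [hr] at hy
  have heq : ((r - min p q : ℤ) : ℝ) = 1/2 := by rw [Int.cast_sub]; linarith
  have hpos : 0 < r - min p q := by
    have : (0:ℝ) < ((r - min p q : ℤ) : ℝ) := by rw [heq]; norm_num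
    exact_mod_cast this
  have : (1:ℝ) ≤ ((r - min p q : ℤ) : ℝ) := by exact_mod_cast hpos
  linarith

noncomputable def e (t : ℝ) : ℂ := Complex.exp (2 * Real.pi * Complex.I * t)

lemma e_eq_one_iff (t : ℝ) : e t = 1 ↔ ∃ m : ℤ, t = m := by
  rw [e, Complex.exp_eq_one_iff]
  constructor
  · rintro ⟨m, hm⟩
    refine ⟨m, ?_⟩
    have h2 : (2 * (Real.pi:ℂ) * Complex.I) ≠ 0 :=
      mul_ne_zero (mul_ne_zero two_ne_zero
        (Complex.ofReal_ne_zero.mpr Real.pi_ne_zero)) Complex.I_ne_zero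
    have h3 : (2 * (Real.pi : ℂ) * Complex.I) * (t : ℂ)
        = (2 * (Real.pi : ℂ) * Complex.I) * (m : ℂ) := by rw [hm]; ring
    exact_mod_cast mul_left_cancel₀ h2 h3
  · rintro ⟨m, hm⟩
    exact ⟨m, by rw [hm]; push_cast; ring⟩

lemma e_add (a b : ℝ) : e (a + b) = e a * e b := by
  rw [e, e, e, ← Complex.exp_add]; congr 1; push_cast; ring

lemma e_pow (a : ℝ) (N : ℕ) : (e a) ^ N = e (N * a) := by
  rw [e, e, ← Complex.exp_nat_mul]; congr 1; push_cast; ring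

lemma e_abs (t : ℝ) : ‖e t‖ = 1 := by
  have : 2 * (Real.pi : ℂ) * Complex.I * t = ((2 * Real.pi * t : ℝ) : ℂ) * Complex.I := by
    push_cast; ring
  rw [e, this, Complex.norm_exp_ofReal_mul_I]

lemma e_surj {z : ℂ} (hz : ‖z‖ = 1) : z = e (z.arg / (2 * Real.pi)) := by
  have h := Complex.norm_mul_exp_arg_mul_I z
  rw [hz] at h
  simp only [Complex.ofReal_one, one_mul] at h
  conv_lhs => rw [← h]
  rw [e]; congr 1
  have hpi : (Real.pi : ℂ) ≠ 0 := by exact_mod_cast Real.pi_ne_zero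
  push_cast
  field_simp

lemma e_sub_int {a b : ℝ} (h : e a = e b) : ∃ m : ℤ, a - b = m := by
  apply (e_eq_one_iff _).mp
  have hb : e b ≠ 0 := Complex.exp_ne_zero _
  have h2 : e (a - b) * e b = e b := by
    rw [← e_add, sub_add_cancel, h]
  exact mul_right_cancel₀ hb (by rw [h2, one_mul])


/-- An orientation-preserving homeomorphism of the unit circle (given by a continuous,
strictly increasing lift `f` with `f (x + 1) = f x + 1`) that fixes `1` and commutes
with `z ↦ z ^ n` (`n ≥ 2`) fixes every `n ^ k`-th root of unity. -/
theorem fixes_roots_of_unity (n : ℕ) (hn : 2 ≤ n) (φ : ℂ → ℂ) (f : ℝ → ℝ)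
    (hf_cont : Continuous f) (hf_mono : StrictMono f)
    (hf_per : ∀ x : ℝ, f (x + 1) = f x + 1)
    (hlift : ∀ x : ℝ, φ (Complex.exp (2 * Real.pi * Complex.I * x)) =
      Complex.exp (2 * Real.pi * Complex.I * (f x)))
    (hfix : φ 1 = 1)
    (hcomm : ∀ z : ℂ, ‖z‖ = 1 → φ (z ^ n) = (φ z) ^ n) :
    ∀ z : ℂ, ‖z‖ = 1 → (∃ k : ℕ, z ^ (n ^ k) = 1) → φ z = z := by
  have hlift' : ∀ x : ℝ, φ (e x) = e (f x) := fun x => hlift x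
  have e0 : e (0:ℝ) = 1 := by simp [e]
  have h0 : e (f 0) = 1 := by rw [← hlift' 0, e0, hfix]
  obtain ⟨c0, hc0⟩ := (e_eq_one_iff _).mp h0
  -- integer differences
  have hint : ∀ x : ℝ, ∃ m : ℤ, f ((n:ℝ) * x) - (n:ℝ) * f x = m := by
    intro x
    have h1 := hcomm (e x) (e_abs x)
    rw [e_pow, hlift', hlift', e_pow] at h1
    exact e_sub_int h1
  have hF : ∀ x : ℝ, f ((n:ℝ) * x) - (n:ℝ) * f x = f 0 - (n:ℝ) * f 0 := by
    intro x
    have hFc : Continuous (fun x : ℝ => f ((n:ℝ) * x) - (n:ℝ) * f x) :=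
      (hf_cont.comp (continuous_const.mul continuous_id)).sub (continuous_const.mul hf_cont)
    have h := int_valued_const hFc hint x
    simpa using h
  set c := f 0 with hc
  have hg : ∀ x : ℝ, f ((n:ℝ) * x) - c = (n:ℝ) * (f x - c) := by
    intro x; have := hF x; ring_nf; ring_nf at this; linarith
  have hgk : ∀ (k : ℕ) (x : ℝ), f ((n:ℝ)^k * x) - c = (n:ℝ)^k * (f x - c) := by
    intro k
    induction k with
    | zero => simp
    | succ k ih =>
      intro x
      rw [show (n:ℝ)^(k+1) * x = (n:ℝ) * ((n:ℝ)^k * x) by ring, hg, ih]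
      ring
  have hper : ∀ (j : ℤ) (x : ℝ), f (x + j) = f x + j := by
    intro j
    induction j using Int.induction_on with
    | zero => simp
    | succ k ih =>
      intro x
      push_cast
      rw [show x + ((k:ℝ) + 1) = (x + k) + 1 by ring, hf_per]
      have := ih x; push_cast at this; rw [this]; ring
    | pred k ih =>
      intro x
      push_cast
      have h1 := hf_per (x + (-(k:ℝ) - 1))
      rw [show x + (-(k:ℝ) - 1) + 1 = x + (-(k:ℝ)) by ring] at h1
      have h2 := ih x; push_cast at h2
      rw [show x + (-(k:ℝ)) = x + -(k:ℝ) by ring] at h1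
      rw [show x + (-(k:ℝ) - 1) = x + (-(k:ℝ) - 1) from rfl]
      linarith
  have hfixpt : ∀ (k : ℕ) (m : ℤ) (t : ℝ), (n:ℝ)^k * t = m → f t = t + c := by
    intro k m t ht
    have h1 := hgk k t
    rw [ht] at h1
    have h2 : f (m:ℝ) = c + m := by
      have := hper m 0; rw [zero_add] at this; rw [this, hc]
    have hnk : ((n:ℝ)^k) ≠ 0 := by positivity
    have h3 : (n:ℝ)^k * (f t - c) = (n:ℝ)^k * t := by
      rw [← h1, h2, ht]; ring
    have := mul_left_cancel₀ hnk h3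
    linarith
  intro z hz hk
  obtain ⟨k, hk⟩ := hk
  have hze : z = e (z.arg / (2 * Real.pi)) := e_surj hz
  set t := z.arg / (2 * Real.pi) with htdef
  rw [hze, e_pow] at hk
  have hk' : e ((n:ℝ)^k * t) = 1 := by
    rw [show ((n:ℝ)^k * t) = ((n^k : ℕ) : ℝ) * t by push_cast; ring]
    exact hk
  obtain ⟨m, hm⟩ := (e_eq_one_iff _).mp hk'
  have hft := hfixpt k m t hm
  rw [hze, hlift', hft, e_add, (e_eq_one_iff c).mpr ⟨c0, hc0⟩, mul_one]
end

section
/- Let n ≥ 2 be an integer. Any orientation-preserving homeomorphism φ of the unit circle {z ∈ ℂ : |z| = 1} satisfying φ(1) = 1 and φ(z^n) = φ(z)^n for all z on the unit circle is the identity map. -/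
/-- An orientation-preserving homeomorphism of the unit circle (given by a continuous,
strictly increasing lift `f` with `f (x + 1) = f x + 1`) that fixes `1` and commutes
with `z ↦ z ^ n` (`n ≥ 2`) is the identity on the unit circle. -/
theorem identity_on_circle (n : ℕ) (hn : 2 ≤ n) (φ : ℂ → ℂ) (f : ℝ → ℝ)
    (hf_cont : Continuous f) (hf_mono : StrictMono f)
    (hf_per : ∀ x : ℝ, f (x + 1) = f x + 1)
    (hlift : ∀ x : ℝ, φ (Complex.exp (2 * Real.pi * Complex.I * x)) =
      Complex.exp (2 * Real.pi * Complex.I * (f x)))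
    (hfix : φ 1 = 1)
    (hcomm : ∀ z : ℂ, ‖z‖ = 1 → φ (z ^ n) = (φ z) ^ n) :
    ∀ z : ℂ, ‖z‖ = 1 → φ z = z := by
  have hpi : (Real.pi : ℝ) ≠ 0 := Real.pi_ne_zero
  -- exp(2πI x) = 1 iff x is an integer
  have hexp_int : ∀ (x : ℝ), Complex.exp (2 * Real.pi * Complex.I * x) = 1 ↔
      ∃ m : ℤ, x = m := by
    intro x
    rw [Complex.exp_eq_one_iff]
    constructor
    · rintro ⟨m, hm⟩
      refine ⟨m, ?_⟩
      have h2 : (2 * (Real.pi : ℂ) * Complex.I : ℂ) ≠ 0 := by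
        simp [Real.pi_ne_zero, Complex.I_ne_zero]
      have hx : (x : ℂ) = (m : ℂ) := by
        apply mul_left_cancel₀ h2
        rw [show (2 * (Real.pi : ℂ) * Complex.I) * (x : ℂ)
            = 2 * (Real.pi : ℂ) * Complex.I * x by ring]
        rw [hm]; ring
      exact_mod_cast hx
    · rintro ⟨m, rfl⟩
      exact ⟨m, by push_cast; ring⟩
  -- exp(2πI x) has modulus 1
  have habs : ∀ x : ℝ, ‖Complex.exp (2 * Real.pi * Complex.I * x)‖ = 1 := by
    intro x
    rw [Complex.norm_exp]
    have : (2 * (Real.pi : ℂ) * Complex.I * (x : ℝ)).re = 0 := by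
      simp [Complex.mul_re, Complex.mul_im]
    rw [this, Real.exp_zero]
  -- power rule for the exponential
  have hpow : ∀ x : ℝ, Complex.exp (2 * Real.pi * Complex.I * x) ^ n
      = Complex.exp (2 * Real.pi * Complex.I * (((n : ℝ) * x : ℝ) : ℂ)) := by
    intro x
    rw [← Complex.exp_nat_mul]
    congr 1
    push_cast; ring
  -- exp equal implies difference is an integer
  have hexp_eq : ∀ a b : ℝ, Complex.exp (2 * Real.pi * Complex.I * a)
      = Complex.exp (2 * Real.pi * Complex.I * b) → ∃ m : ℤ, a - b = m := by
    intro a b hab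
    apply (hexp_int (a - b)).1
    have : Complex.exp (2 * Real.pi * Complex.I * (((a - b : ℝ)) : ℂ) + 2 * Real.pi * Complex.I * b)
        = Complex.exp (2 * Real.pi * Complex.I * b) := by
      rw [show (2 * (Real.pi:ℂ) * Complex.I * (((a - b : ℝ)) : ℂ) + 2 * Real.pi * Complex.I * b)
          = 2 * Real.pi * Complex.I * (a:ℝ) by push_cast; ring, hab]
    rw [Complex.exp_add] at this
    have hne : Complex.exp (2 * Real.pi * Complex.I * (b:ℝ)) ≠ 0 := Complex.exp_ne_zero _
    field_simp at this
    push_cast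
    exact_mod_cast this
  -- f(nx) - n f(x) is an integer for every x
  have hint : ∀ x : ℝ, ∃ m : ℤ, f ((n : ℝ) * x) - (n : ℝ) * f x = m := by
    intro x
    apply hexp_eq
    have h1 := hcomm (Complex.exp (2 * Real.pi * Complex.I * x)) (habs x)
    rw [hpow x, hlift ((n : ℝ) * x), hlift x, hpow (f x)] at h1
    exact h1
  -- the continuous integer-valued function x ↦ f(nx) - n f(x) is constant
  have hconst : ∀ x : ℝ, f ((n : ℝ) * x) - (n : ℝ) * f x = f 0 - (n : ℝ) * f 0 := by
    have hcont : Continuous (fun x : ℝ => f ((n : ℝ) * x) - (n : ℝ) * f x) :=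
      (hf_cont.comp (continuous_const.mul continuous_id)).sub (continuous_const.mul hf_cont)
    intro x
    set h : ℝ → ℝ := fun x => f ((n : ℝ) * x) - (n : ℝ) * f x with hh
    obtain ⟨mx, hmx⟩ := hint x
    obtain ⟨m0, hm0⟩ := hint 0
    have h0eq : h 0 = f 0 - (n : ℝ) * f 0 := by simp [hh]
    rw [← h0eq]
    show h x = h 0
    by_contra hne
    have key : ∀ c : ℝ, c ∈ Set.Icc (h 0) (h x) ∪ Set.Icc (h x) (h 0) →
        ∃ m : ℤ, c = m := by
      intro c hc
      have : c ∈ Set.range h := by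
        rcases hc with hc | hc
        · exact intermediate_value_univ 0 x hcont hc
        · exact intermediate_value_univ x 0 hcont hc
      obtain ⟨y, hy⟩ := this
      obtain ⟨my, hmy⟩ := hint y
      exact ⟨my, by rw [← hy]; exact hmy⟩
    have hhx : h x = (mx : ℝ) := hmx
    have hh0 : h 0 = (m0 : ℝ) := by
      have := hm0; simpa [hh] using this
    rcases lt_trichotomy (h 0) (h x) with hlt | heq | hlt
    · obtain ⟨m, hm⟩ := key (h 0 + 1/2) (Or.inl ⟨by linarith, by
        rw [hhx, hh0] at hlt ⊢
        have : m0 + 1 ≤ mx := by exact_mod_cast hlt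
        have : (m0 : ℝ) + 1 ≤ mx := by exact_mod_cast this
        linarith⟩)
      rw [hh0] at hm
      have : (2 * m : ℤ) = (2 * m0 + 1 : ℤ) := by
        have : (2 * m : ℝ) = (2 * m0 + 1 : ℝ) := by push_cast at hm ⊢; linarith
        exact_mod_cast this
      omega
    · exact hne heq.symm
    · obtain ⟨m, hm⟩ := key (h x + 1/2) (Or.inr ⟨by linarith, by
        rw [hhx, hh0] at hlt ⊢
        have : mx + 1 ≤ m0 := by exact_mod_cast hlt
        have : (mx : ℝ) + 1 ≤ m0 := by exact_mod_cast this
        linarith⟩)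
      rw [hhx] at hm
      have : (2 * m : ℤ) = (2 * mx + 1 : ℤ) := by
        have : (2 * m : ℝ) = (2 * mx + 1 : ℝ) := by push_cast at hm ⊢; linarith
        exact_mod_cast this
      omega
  -- g = f - f 0
  set g : ℝ → ℝ := fun x => f x - f 0 with hg
  have gmul : ∀ x : ℝ, g ((n : ℝ) * x) = (n : ℝ) * g x := by
    intro x
    have := hconst x
    simp only [hg]
    linarith
  have gper : ∀ x : ℝ, g (x + 1) = g x + 1 := by
    intro x; simp only [hg]; rw [hf_per]; ring
  have gmono : Monotone g := fun a b hab => by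
    simp only [hg]; exact sub_le_sub_right (hf_mono.monotone hab) _
  -- g on integers
  have fint : ∀ m : ℤ, ∀ x : ℝ, f (x + m) = f x + m := by
    intro m
    induction m using Int.induction_on with
    | zero => intro x; simp
    | succ k ih =>
        intro x
        have := hf_per (x + k)
        push_cast
        push_cast at ih this
        rw [show x + (k + 1 : ℝ) = x + k + 1 by ring, this, ih]
        ring
    | pred k ih =>
        intro x
        have := hf_per (x + (-(k:ℝ) - 1))
        push_cast
        push_cast at ih this
        rw [show x + (-(k:ℝ) - 1) + 1 = x + -(k:ℝ) by ring] at this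
        linarith [ih x]
  have gZ : ∀ m : ℤ, g (m : ℝ) = m := by
    intro m
    simp only [hg]
    have := fint m 0
    rw [zero_add] at this
    rw [this]; ring
  -- |g y - y| ≤ 1
  have gbound : ∀ y : ℝ, |g y - y| ≤ 1 := by
    intro y
    have h1 : (⌊y⌋ : ℝ) ≤ y := Int.floor_le y
    have h2 : y ≤ (⌊y⌋ : ℝ) + 1 := (Int.lt_floor_add_one y).le
    have g1 : (⌊y⌋ : ℝ) ≤ g y := by
      rw [← gZ ⌊y⌋]; exact gmono h1
    have g2 : g y ≤ (⌊y⌋ : ℝ) + 1 := by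
      have : g ((⌊y⌋ : ℝ) + 1) = (⌊y⌋ : ℝ) + 1 := by
        have := gZ (⌊y⌋ + 1); push_cast at this; exact this
      rw [← this]; exact gmono h2
    rw [abs_le]; constructor <;> linarith
  -- g(n^k x) = n^k g(x)
  have gpow : ∀ (k : ℕ) (x : ℝ), g ((n : ℝ) ^ k * x) = (n : ℝ) ^ k * g x := by
    intro k
    induction k with
    | zero => intro x; simp
    | succ k ih =>
        intro x
        rw [show ((n:ℝ) ^ (k+1) * x) = (n:ℝ) * ((n:ℝ)^k * x) by ring, gmul, ih]
        ring
  -- g is the identity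
  have gid : ∀ x : ℝ, g x = x := by
    intro x
    by_contra hne
    have hd : 0 < |g x - x| := abs_pos.2 (sub_ne_zero.2 hne)
    obtain ⟨k, hk⟩ := pow_unbounded_of_one_lt (1 / |g x - x|)
      (show (1:ℝ) < n by exact_mod_cast hn.trans_lt' one_lt_two)
    have hb := gbound ((n : ℝ) ^ k * x)
    rw [gpow] at hb
    have : (n:ℝ)^k * |g x - x| ≤ 1 := by
      calc (n:ℝ)^k * |g x - x| = |(n:ℝ)^k * (g x - x)| := by
            rw [abs_mul, abs_of_nonneg (by positivity : (0:ℝ) ≤ (n:ℝ)^k)]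
          _ = |(n:ℝ)^k * g x - (n:ℝ)^k * x| := by ring_nf
          _ ≤ 1 := hb
    have : 1 / |g x - x| < (n:ℝ)^k := hk
    have h2 : 1 < (n:ℝ)^k * |g x - x| := by
      rw [div_lt_iff₀ hd] at this
      linarith [this]
    linarith
  -- f 0 is an integer
  obtain ⟨m₀, hm₀⟩ : ∃ m : ℤ, f 0 = m := by
    apply (hexp_int (f 0)).1
    have := hlift 0
    rw [show ((0:ℝ):ℂ) = 0 by norm_num, mul_zero, Complex.exp_zero, hfix] at this
    exact this.symm
  have fid : ∀ x : ℝ, f x = x + m₀ := by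
    intro x
    have := gid x
    simp only [hg] at this
    rw [hm₀] at this
    linarith
  -- conclude
  intro z hz
  have hz' : z = Complex.exp ((z.arg : ℂ) * Complex.I) := by
    conv_lhs => rw [← Complex.norm_mul_exp_arg_mul_I z]
    rw [hz]; push_cast; ring_nf
  set x : ℝ := z.arg / (2 * Real.pi) with hx
  have hzx : z = Complex.exp (2 * Real.pi * Complex.I * x) := by
    rw [hz']
    congr 1
    push_cast [hx]
    have hpiC : (Real.pi : ℂ) ≠ 0 := by exact_mod_cast hpi
    field_simp
  rw [hzx, hlift, fid]
  rw [show (2 * (Real.pi:ℂ) * Complex.I * ((x + (m₀:ℝ) : ℝ) : ℂ))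
      = 2 * Real.pi * Complex.I * (x:ℝ) + (m₀:ℤ) * (2 * Real.pi * Complex.I) by
    push_cast; ring]
  rw [Complex.exp_add, Complex.exp_int_mul_two_pi_mul_I, mul_one]
end

section
/- Let n ≥ 2 be an integer and let φ be an orientation-preserving homeomorphism of the unit circle {z ∈ ℂ : |z| = 1} satisfying φ(z^n) = φ(z)^n for all z on the unit circle. Then φ is a rotation by an (n−1)-st root of unity: there exists a ∈ ℂ with |a| = 1 and a^(n−1) = 1 such that φ(z) = a·z for all z on the unit circle. -/
open Complex Real Filter

/-- An orientation-preserving homeomorphism of the unit circle (given by a continuous,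
strictly increasing lift `f` with `f (x + 1) = f x + 1`) that commutes with
`z ↦ z ^ n` (`n ≥ 2`) is a rotation by an `(n - 1)`-st root of unity. -/
theorem is_rotation_by_root_of_unity (n : ℕ) (hn : 2 ≤ n) (φ : ℂ → ℂ) (f : ℝ → ℝ)
    (hf_cont : Continuous f) (hf_mono : StrictMono f)
    (hf_per : ∀ x : ℝ, f (x + 1) = f x + 1)
    (hlift : ∀ x : ℝ, φ (Complex.exp (2 * Real.pi * Complex.I * x)) =
      Complex.exp (2 * Real.pi * Complex.I * (f x)))
    (hcomm : ∀ z : ℂ, ‖z‖ = 1 → φ (z ^ n) = (φ z) ^ n) :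
    ∃ a : ℂ, ‖a‖ = 1 ∧ a ^ (n - 1) = 1 ∧
      ∀ z : ℂ, ‖z‖ = 1 → φ z = a * z := by
  have hπ : (Real.pi : ℝ) ≠ 0 := Real.pi_ne_zero
  have h2πI : (2 * Real.pi * Complex.I : ℂ) ≠ 0 := by
    simp [Complex.I_ne_zero, hπ]
  have habs : ∀ x : ℝ, ‖Complex.exp (2 * Real.pi * Complex.I * x)‖ = 1 := by
    intro x
    rw [Complex.norm_exp]
    simp [Complex.mul_re, Complex.mul_im]
  -- Step 1: integrality of f(nx) - n f(x)
  have hint : ∀ x : ℝ, ∃ m : ℤ, f (n * x) = n * f x + m := by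
    intro x
    have h1 := hlift (n * x)
    have h2 := hlift x
    have hpow : Complex.exp (2 * Real.pi * Complex.I * ((n : ℝ) * x : ℝ)) =
        (Complex.exp (2 * Real.pi * Complex.I * x)) ^ n := by
      rw [← Complex.exp_nat_mul]; congr 1; push_cast; ring
    have h3 : Complex.exp (2 * Real.pi * Complex.I * (f (n * x))) =
        Complex.exp ((n : ℂ) * (2 * Real.pi * Complex.I * (f x))) := by
      rw [← h1, hpow, hcomm _ (habs x), h2, ← Complex.exp_nat_mul]
    obtain ⟨m, hm⟩ := Complex.exp_eq_exp_iff_exists_int.mp h3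
    refine ⟨m, ?_⟩
    have : (2 * Real.pi * Complex.I) * (f (n * x) : ℂ) =
        (2 * Real.pi * Complex.I) * ((n : ℝ) * f x + (m : ℝ) : ℝ) := by
      rw [hm]; push_cast; ring
    have := mul_left_cancel₀ h2πI this
    exact_mod_cast this
  -- Step 2: the integer is constant
  set g : ℝ → ℝ := fun x => f (n * x) - n * f x with hg
  have hg_cont : Continuous g := by
    exact (hf_cont.comp (continuous_const.mul continuous_id)).sub
      (continuous_const.mul hf_cont)
  have hg_int : ∀ x, ∃ m : ℤ, g x = m := by
    intro x; obtain ⟨m, hm⟩ := hint x; exact ⟨m, by simp [hg, hm]⟩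
  have hg_const : ∀ x, g x = g 0 := by
    intro x
    set S : Set ℝ := {y | g y = g 0} with hS
    have hclosed : IsClosed S := isClosed_eq hg_cont continuous_const
    have hopen : IsOpen S := by
      rw [isOpen_iff_mem_nhds]
      intro y hy
      have ht : ∀ᶠ z in nhds y, |g z - g y| < 1 := by
        have := (hg_cont.tendsto y) (Metric.ball_mem_nhds (g y) one_pos)
        filter_upwards [this] with z hz
        simpa [Real.dist_eq] using hz
      filter_upwards [ht] with z hz
      obtain ⟨mz, hmz⟩ := hg_int z
      obtain ⟨my, hmy⟩ := hg_int y
      have : |((mz - my : ℤ) : ℝ)| < 1 := by push_cast; rw [← hmz, ← hmy]; exact hz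
      have h1 : |mz - my| < 1 := by exact_mod_cast this
      have h2 := abs_lt.mp h1
      have : mz = my := by omega
      show g z = g 0
      rw [hmz, this, ← hmy, hy]
    have : S = Set.univ := IsClopen.eq_univ ⟨hclosed, hopen⟩ ⟨0, rfl⟩
    exact Set.eq_univ_iff_forall.mp this x
  obtain ⟨k, hk⟩ := hg_int 0
  have hfn : ∀ x, f (n * x) = n * f x + k := by
    intro x
    have := hg_const x
    rw [hk] at this
    have : f (n * x) - n * f x = k := this
    linarith
  set c := f 0 with hc
  have hck : ((n : ℝ) - 1) * c = -k := by
    have := hfn 0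
    simp only [mul_zero, ← hc] at this
    linarith
  -- Step 3: f x = x + c
  set u : ℝ → ℝ := fun x => f x - x - c with hu
  have hu_cont : Continuous u := (hf_cont.sub continuous_id).sub continuous_const
  have hu_per : Function.Periodic u 1 := by
    intro x; simp only [hu]; rw [hf_per]; ring
  have hu_scale : ∀ x, u (n * x) = n * u x := by
    intro x
    simp only [hu]
    rw [hfn x]
    have : (n : ℝ) * f x + k - n * x - c = n * (f x - x - c) + (((n:ℝ) - 1) * c + k) := by ring
    rw [this, hck]; ring
  obtain ⟨C, hC⟩ := (isCompact_Icc (a := (0:ℝ)) (b := 1)).exists_bound_of_continuousOn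
    hu_cont.continuousOn
  have hbound : ∀ x, |u x| ≤ C := by
    intro x
    have h1 : u (Int.fract x) = u x := by
      rw [Int.fract]
      simpa only [mul_one] using hu_per.sub_int_mul_eq ⌊x⌋
    have h2 : Int.fract x ∈ Set.Icc (0:ℝ) 1 :=
      ⟨Int.fract_nonneg x, le_of_lt (Int.fract_lt_one x)⟩
    have := hC _ h2
    rw [h1] at this
    simpa [Real.norm_eq_abs] using this
  have hiter : ∀ (m : ℕ) (x : ℝ), u ((n:ℝ)^m * x) = (n:ℝ)^m * u x := by
    intro m
    induction m with
    | zero => intro x; simp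
    | succ m ih =>
      intro x
      have : (n:ℝ)^(m+1) * x = n * ((n:ℝ)^m * x) := by ring
      rw [this, hu_scale, ih]; ring
  have hu_zero : ∀ x, u x = 0 := by
    intro x
    have hn1 : (1:ℝ) < n := by exact_mod_cast hn.trans_lt' one_lt_two
    have hle : ∀ m : ℕ, |u x| ≤ C / (n:ℝ)^m := by
      intro m
      have hpos : (0:ℝ) < (n:ℝ)^m := pow_pos (by linarith) m
      rw [le_div_iff₀ hpos]
      calc |u x| * (n:ℝ)^m = |(n:ℝ)^m * u x| := by
            rw [abs_mul, abs_of_pos hpos]; ring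
        _ = |u ((n:ℝ)^m * x)| := by rw [hiter]
        _ ≤ C := hbound _
    have htend : Tendsto (fun m : ℕ => C / (n:ℝ)^m) atTop (nhds 0) :=
      tendsto_const_nhds.div_atTop (tendsto_pow_atTop_atTop_of_one_lt hn1)
    have : |u x| ≤ 0 := ge_of_tendsto htend (Filter.Eventually.of_forall hle)
    have := abs_nonneg (u x)
    linarith [abs_eq_zero.mp (le_antisymm ‹|u x| ≤ 0› this)]
  have hf_eq : ∀ x, f x = x + c := by
    intro x; have := hu_zero x; simp only [hu] at this; linarith
  -- Step 4: conclude
  refine ⟨Complex.exp (2 * Real.pi * Complex.I * c), habs c, ?_, ?_⟩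
  · rw [← Complex.exp_nat_mul]
    have hcast : ((n - 1 : ℕ) : ℂ) = (n : ℂ) - 1 := by
      push_cast [Nat.cast_sub (by omega : 1 ≤ n)]; ring
    have : ((n - 1 : ℕ) : ℂ) * (2 * Real.pi * Complex.I * c) = (-k : ℤ) * (2 * Real.pi * Complex.I) := by
      rw [hcast]
      have : ((n : ℂ) - 1) * (c : ℂ) = ((-k : ℤ) : ℂ) := by
        exact_mod_cast congrArg (Complex.ofReal) hck
      push_cast at this ⊢
      rw [show ((n:ℂ) - 1) * (2 * Real.pi * Complex.I * c) = (((n:ℂ)-1) * c) * (2 * Real.pi * Complex.I) by ring, this]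
    rw [this, Complex.exp_int_mul_two_pi_mul_I]
  · intro z hz
    have hz' : z = Complex.exp ((z.arg : ℂ) * Complex.I) := by
      conv_lhs => rw [← Complex.norm_mul_exp_arg_mul_I z]
      rw [hz]; simp
    set x := z.arg / (2 * Real.pi) with hx
    have hxz : Complex.exp (2 * Real.pi * Complex.I * x) = z := by
      rw [hz']; congr 1
      have hπC : (Real.pi : ℂ) ≠ 0 := Complex.ofReal_ne_zero.mpr hπ
      rw [hx]
      push_cast
      field_simp
    have := hlift x
    rw [hxz, hf_eq x] at this
    rw [this]
    push_cast
    rw [mul_add, Complex.exp_add, hxz]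
    ring
end
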